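/- Let T be a leaf-ordered rooted binary tree on n leaves, and let e be an internal edge of T whose endpoints have canonical labels −k (the upper endpoint, closer to the root) and −j (the lower endpoint). If T′ is obtained from T by an NNI move across e such that in T′ the upper endpoint of the modified edge has canonical label −j instead of −k, then d_OLA(T, T′) ≤ 1 + c_k, where c_k denotes the number of entries equal to −k in the OLA encoding of T. -/

import Mathlib

/-- A rooted binary tree whose leaves carry natural-number labels. -/
inductive BTree : Type
  | leaf : ℕ → BTree
  | node : BTree → BTree → BTree
  deriving DecidableEq

namespace BTree

/-- The minimum leaf label in a tree (the "clade-founder" label of its root). -/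
def minLeaf : BTree → ℕ
  | leaf j => j
  | node l r => min (minLeaf l) (minLeaf r)

/-- The label of the root node of a subtree: a leaf carries its own label,
and an internal node carries its canonical label `-CS`, where `CS` is the
"clade-splitter" label, i.e. the maximum of the children's clade-founder labels. -/
def nodeLabel : BTree → ℤ
  | leaf j => (j : ℤ)
  | node l r => -(max (minLeaf l) (minLeaf r) : ℤ)

/-- The multiset of leaf labels of a tree. -/
def leafMultiset : BTree → Multiset ℕ
  | leaf j => {j}
  | node l r => leafMultiset l + leafMultiset r

/-- Canonical form for representing an *unordered* tree by an ordered one: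
at each internal node the left subtree contains the smaller minimum leaf label. -/
def Canonical : BTree → Prop
  | leaf _ => True
  | node l r => minLeaf l < minLeaf r ∧ Canonical l ∧ Canonical r

/-- `IsRBT n T` : `T` is (the canonical representative of) a leaf-ordered rooted
binary tree on `n` leaves, bijectively labeled `0, 1, ..., n-1`. -/
def IsRBT (n : ℕ) (T : BTree) : Prop :=
  Canonical T ∧ leafMultiset T = Multiset.range n

/-- Number of leaves. -/
def numLeaves : BTree → ℕ
  | leaf _ => 1
  | node l r => numLeaves l + numLeaves r

/-- Delete the leaf labeled `i` (together with its parent); return the label of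
its sister node together with the remaining tree. -/
def deleteLeaf (i : ℕ) : BTree → Option (ℤ × BTree)
  | leaf _ => none
  | node l r =>
    if l = leaf i then some (nodeLabel r, r)
    else if r = leaf i then some (nodeLabel l, l)
    else
      match deleteLeaf i l with
      | some (a, l') => some (a, node l' r)
      | none =>
        match deleteLeaf i r with
        | some (a, r') => some (a, node l r')
        | none => none

/-- Deconstruct a tree by removing leaves `m, m-1, ..., 1` in reverse order,
recording the (leaf or canonical internal) label of the sister of each removed leaf. -/
def olaEncodeAux : ℕ → BTree → List ℤ
  | 0, _ => []
  | m + 1, T =>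
    match deleteLeaf (m + 1) T with
    | some (a, T') => olaEncodeAux m T' ++ [a]
    | none => []

/-- The OLA (ordered leaf attachment) encoding `(a_1, ..., a_{n-1})` of a tree on
`n` leaves: `a_i` is the label of the node that is the sister of leaf `i` at the
step when leaf `i` is attached. -/
def olaEncode (T : BTree) : List ℤ := olaEncodeAux (numLeaves T - 1) T

/-- Attach a new leaf labeled `i` as the sister of the node whose label is `a`
(subdividing that node's parent edge). -/
def attachAt (a : ℤ) (i : ℕ) : BTree → BTree
  | leaf j => if (j : ℤ) = a then node (leaf j) (leaf i) else leaf j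
  | node l r =>
    if nodeLabel (node l r) = a then node (node l r) (leaf i)
    else node (attachAt a i l) (attachAt a i r)

/-- Helper for OLA decoding: attach leaves `i, i+1, ...` at the recorded labels. -/
def olaDecodeAux : BTree → ℕ → List ℤ → BTree
  | T, _, [] => T
  | T, i, a :: rest => olaDecodeAux (attachAt a i T) (i + 1) rest

/-- The OLA decoding: starting from the single leaf `0`, attach leaf `i` as the
sister of the node labeled `a_i`, for `i = 1, ..., n-1`. -/
def olaDecode (v : List ℤ) : BTree := olaDecodeAux (leaf 0) 1 v

end BTree

/-- `ValidCode v` : membership of `v = (a_1, ..., a_m)` in `C_m`, i.e. the entry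
`a_i` (at list index `i - 1`) satisfies `-i < a_i < i`. -/
def ValidCode (v : List ℤ) : Prop :=
  ∀ i : Fin v.length, -((i : ℤ) + 1) < v.get i ∧ v.get i < (i : ℤ) + 1

/-- The OLA distance: the Hamming distance between the OLA encodings. -/
def olaDist (T T' : BTree) : ℕ :=
  ((BTree.olaEncode T).zip (BTree.olaEncode T')).countP fun p => decide (p.1 ≠ p.2)

/-- One-hole contexts, marking the position of a subtree/edge in a tree. -/
inductive Ctx : Type
  | hole : Ctx
  | left : Ctx → BTree → Ctx
  | right : BTree → Ctx → Ctx
  deriving DecidableEq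

/-- Fill the hole of a context with a tree. -/
def Ctx.fill : Ctx → BTree → BTree
  | .hole, T => T
  | .left c r, T => BTree.node (Ctx.fill c T) r
  | .right l c, T => BTree.node l (Ctx.fill c T)

/-- Composition of contexts: `(c.comp d).fill X = c.fill (d.fill X)`. -/
def Ctx.comp : Ctx → Ctx → Ctx
  | .hole, d => d
  | .left c r, d => .left (Ctx.comp c d) r
  | .right l c, d => .right l (Ctx.comp c d)

/-- Equality of ordered binary trees as *unordered* trees (children may be swapped
at every internal node). -/
def TreeEquiv : BTree → BTree → Prop
  | .leaf i, .leaf j => i = j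
  | .node l r, .node l' r' =>
      (TreeEquiv l l' ∧ TreeEquiv r r') ∨ (TreeEquiv l r' ∧ TreeEquiv r l')
  | _, _ => False

/-- `T'` is obtained from `T` by a single NNI move: contract an internal edge
(the edge above the subtree `node A B`) and re-resolve the resulting degree-4
node in one of the two other possible ways (unordered). -/
def IsNNIMove (T T' : BTree) : Prop :=
  ∃ (c : Ctx) (A B C : BTree),
    TreeEquiv T (Ctx.fill c (BTree.node (BTree.node A B) C)) ∧
    TreeEquiv T' (Ctx.fill c (BTree.node (BTree.node A C) B))

/-- `T'` is obtained from `T` by a single rooted SPR move: prune the subtree `S`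
(suppressing the resulting degree-2 node) and regraft it by subdividing an edge
of the remaining tree. -/
def IsSPRMove (T T' : BTree) : Prop :=
  ∃ (S : BTree) (c c' : Ctx) (X Y : BTree),
    TreeEquiv T (Ctx.fill c (BTree.node S X)) ∧
    Ctx.fill c X = Ctx.fill c' Y ∧
    TreeEquiv T' (Ctx.fill c' (BTree.node S Y))

/-- The multiset of canonical labels of the internal nodes of a tree. -/
def internalLabels : BTree → Multiset ℤ
  | .leaf _ => 0
  | .node l r => BTree.nodeLabel (BTree.node l r) ::ₘ (internalLabels l + internalLabels r)

/-- `prune k T` : delete all leaves with label `≥ k` and suppress the resulting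
degree-2 nodes (`none` if no leaf survives). -/
def prune (k : ℕ) : BTree → Option BTree
  | .leaf j => if j < k then some (.leaf j) else none
  | .node l r =>
    match prune k l, prune k r with
    | some l', some r' => some (.node l' r')
    | some l', none => some l'
    | none, some r' => some r'
    | none, none => none

namespace OLAAux
open BTree

lemma ms_card (T : BTree) : (leafMultiset T).card = numLeaves T := by
  induction T with
  | leaf j => simp [leafMultiset, numLeaves]
  | node l r ihl ihr => simp [leafMultiset, numLeaves, ihl, ihr]

lemma numLeaves_pos (T : BTree) : 0 < numLeaves T := by
  induction T with
  | leaf j => simp [numLeaves]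
  | node l r ihl ihr => simp [numLeaves]; omega

lemma minLeaf_mem (T : BTree) : minLeaf T ∈ leafMultiset T := by
  induction T with
  | leaf j => simp [leafMultiset, minLeaf]
  | node l r ihl ihr =>
    rcases le_total (minLeaf l) (minLeaf r) with h | h
    · simp [leafMultiset, minLeaf, min_eq_left h, ihl]
    · simp [leafMultiset, minLeaf, min_eq_right h, ihr]

lemma minLeaf_le (T : BTree) : ∀ x ∈ leafMultiset T, minLeaf T ≤ x := by
  induction T with
  | leaf j => simp [leafMultiset, minLeaf]
  | node l r ihl ihr =>
    intro x hx
    simp only [leafMultiset, Multiset.mem_add] at hx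
    rcases hx with hx | hx
    · exact le_trans (min_le_left _ _) (ihl x hx)
    · exact le_trans (min_le_right _ _) (ihr x hx)

lemma notleaf {i : ℕ} {X : BTree} (h : i ∉ leafMultiset X) : X ≠ leaf i := by
  rintro rfl; simp [leafMultiset] at h

lemma delete_node_eq (i : ℕ) (l r : BTree) :
    deleteLeaf i (node l r) =
      if l = leaf i then some (nodeLabel r, r)
      else if r = leaf i then some (nodeLabel l, l)
      else
        match deleteLeaf i l with
        | some (a, l') => some (a, node l' r)
        | none =>
          match deleteLeaf i r with
          | some (a, r') => some (a, node l r')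
          | none => none := rfl

lemma D0 {i : ℕ} : ∀ {T : BTree}, i ∉ leafMultiset T → deleteLeaf i T = none := by
  intro T
  induction T with
  | leaf j => intro _; rfl
  | node l r ihl ihr =>
    intro h
    simp only [leafMultiset, Multiset.mem_add, not_or] at h
    rw [delete_node_eq, if_neg (notleaf h.1), if_neg (notleaf h.2), ihl h.1, ihr h.2]

lemma D_mem {i : ℕ} {T : BTree} {p : ℤ × BTree} (h : deleteLeaf i T = some p) :
    i ∈ leafMultiset T := by
  by_contra hc
  rw [D0 hc] at h
  cases h

lemma D_exists {i : ℕ} : ∀ {T : BTree}, T ≠ leaf i → i ∈ leafMultiset T →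
    ∃ p, deleteLeaf i T = some p := by
  intro T
  induction T with
  | leaf j => intro h hm; simp [leafMultiset] at hm; exact absurd (by rw [hm]) h
  | node l r ihl ihr =>
    intro _ hm
    by_cases h1 : l = leaf i
    · exact ⟨_, by rw [delete_node_eq, if_pos h1]⟩
    by_cases h2 : r = leaf i
    · exact ⟨_, by rw [delete_node_eq, if_neg h1, if_pos h2]⟩
    simp only [leafMultiset, Multiset.mem_add] at hm
    by_cases hil : i ∈ leafMultiset l
    · obtain ⟨⟨a, l'⟩, hp⟩ := ihl h1 hil
      exact ⟨_, by rw [delete_node_eq, if_neg h1, if_neg h2, hp]⟩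
    · have hir : i ∈ leafMultiset r := by tauto
      obtain ⟨⟨a, r'⟩, hp⟩ := ihr h2 hir
      exact ⟨_, by rw [delete_node_eq, if_neg h1, if_neg h2, D0 hil, hp]⟩

lemma D_ms {i : ℕ} : ∀ {T : BTree} {a : ℤ} {T' : BTree},
    deleteLeaf i T = some (a, T') → leafMultiset T' = (leafMultiset T).erase i := by
  intro T
  induction T with
  | leaf j => intro a T' h; cases h
  | node l r ihl ihr =>
    intro a T' h
    rw [delete_node_eq] at h
    by_cases h1 : l = leaf i
    · rw [if_pos h1] at h
      obtain ⟨rfl, rfl⟩ : a = nodeLabel r ∧ T' = r := by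
        cases h; exact ⟨rfl, rfl⟩
      subst h1
      simp [leafMultiset, Multiset.erase_add_left_pos]
    rw [if_neg h1] at h
    by_cases h2 : r = leaf i
    · rw [if_pos h2] at h
      obtain ⟨rfl, rfl⟩ : a = nodeLabel l ∧ T' = l := by cases h; exact ⟨rfl, rfl⟩
      subst h2
      simp [leafMultiset, Multiset.erase_add_right_pos]
    rw [if_neg h2] at h
    rcases hdl : deleteLeaf i l with _ | ⟨⟨b, l'⟩⟩
    · rw [hdl] at h
      rcases hdr : deleteLeaf i r with _ | ⟨⟨b, r'⟩⟩
      · rw [hdr] at h; cases h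
      · rw [hdr] at h
        obtain ⟨rfl, rfl⟩ : a = b ∧ T' = node l r' := by cases h; exact ⟨rfl, rfl⟩
        have := ihr hdr
        simp only [leafMultiset]
        rw [this, Multiset.erase_add_right_pos _ (D_mem hdr)]
    · rw [hdl] at h
      obtain ⟨rfl, rfl⟩ : a = b ∧ T' = node l' r := by cases h; exact ⟨rfl, rfl⟩
      have := ihl hdl
      simp only [leafMultiset]
      rw [this, Multiset.erase_add_left_pos _ (D_mem hdl)]

lemma D_min {i : ℕ} {T : BTree} {a : ℤ} {T' : BTree}
    (h : deleteLeaf i T = some (a, T')) (hlt : minLeaf T < i) :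
    minLeaf T' = minLeaf T := by
  have hms := D_ms h
  have h1 : minLeaf T ≤ minLeaf T' := by
    apply minLeaf_le
    have : minLeaf T' ∈ (leafMultiset T).erase i := hms ▸ minLeaf_mem T'
    exact Multiset.mem_of_mem_erase this
  have h2 : minLeaf T' ≤ minLeaf T := by
    apply minLeaf_le
    rw [hms]
    exact Multiset.mem_erase_of_ne (by omega) |>.mpr (minLeaf_mem T)
  omega

end OLAAux
namespace OLAAux
open BTree

lemma node_of_delete_some {i : ℕ} {T : BTree} {p : ℤ × BTree}
    (h : deleteLeaf i T = some p) : ∃ l r, T = node l r := by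
  cases T with
  | leaf j => cases h
  | node l r => exact ⟨l, r, rfl⟩

lemma LEN : ∀ (m : ℕ) (T U : BTree), leafMultiset T = leafMultiset U →
    (olaEncodeAux m T).length = (olaEncodeAux m U).length := by
  intro m
  induction m with
  | zero => intro T U _; rfl
  | succ m ih =>
    intro T U hms
    have key : ∀ (X Y : BTree) (p : ℤ × BTree), leafMultiset X = leafMultiset Y →
        deleteLeaf (m+1) X = some p → deleteLeaf (m+1) Y = none → False := by
      intro X Y p hXY hX hY
      have hmem : (m+1) ∈ leafMultiset Y := hXY ▸ D_mem hX
      cases Y with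
      | leaf j =>
        simp only [leafMultiset, Multiset.mem_singleton] at hmem
        subst hmem
        obtain ⟨l, r, rfl⟩ := node_of_delete_some hX
        have : (leafMultiset (node l r)).card = 1 := by rw [hXY]; simp [leafMultiset]
        rw [ms_card] at this
        have h1 := numLeaves_pos l
        have h2 := numLeaves_pos r
        simp [numLeaves] at this
        omega
      | node l r =>
        obtain ⟨q, hq⟩ := D_exists (by rintro h; exact BTree.noConfusion h) hmem
        rw [hq] at hY; cases hY
    rcases hT : deleteLeaf (m+1) T with _ | ⟨⟨a, T₁⟩⟩ <;>
      rcases hU : deleteLeaf (m+1) U with _ | ⟨⟨b, U₁⟩⟩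
    · simp [olaEncodeAux, hT, hU]
    · exact absurd (key U T _ hms.symm hU hT) (by simp)
    · exact absurd (key T U _ hms hT hU) (by simp)
    · simp only [olaEncodeAux, hT, hU, List.length_append]
      rw [ih T₁ U₁ (by rw [D_ms hT, D_ms hU, hms])]; simp

lemma equiv_refl : ∀ (T : BTree), TreeEquiv T T := by
  intro T
  induction T with
  | leaf j => simp [TreeEquiv]
  | node l r ihl ihr => exact Or.inl ⟨ihl, ihr⟩

lemma equiv_leaf_right : ∀ {U : BTree} {j : ℕ}, TreeEquiv (leaf j) U → U = leaf j := by
  intro U j h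
  cases U with
  | leaf j' => simp [TreeEquiv] at h; rw [h]
  | node l r => exact absurd h (by simp [TreeEquiv])

lemma equiv_leaf_left : ∀ {U : BTree} {j : ℕ}, TreeEquiv U (leaf j) → U = leaf j := by
  intro U j h
  cases U with
  | leaf j' => simp [TreeEquiv] at h; rw [h]
  | node l r => exact absurd h (by simp [TreeEquiv])

lemma equiv_ms : ∀ {T U : BTree}, TreeEquiv T U → leafMultiset T = leafMultiset U := by
  intro T
  induction T with
  | leaf j => intro U h; rw [equiv_leaf_right h]
  | node l r ihl ihr =>
    intro U h
    cases U with
    | leaf j => exact absurd h (by simp [TreeEquiv])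
    | node l' r' =>
      rcases h with ⟨h1, h2⟩ | ⟨h1, h2⟩
      · simp [leafMultiset, ihl h1, ihr h2]
      · simp [leafMultiset, ihl h1, ihr h2, add_comm]

lemma equiv_min : ∀ {T U : BTree}, TreeEquiv T U → minLeaf T = minLeaf U := by
  intro T
  induction T with
  | leaf j => intro U h; rw [equiv_leaf_right h]
  | node l r ihl ihr =>
    intro U h
    cases U with
    | leaf j => exact absurd h (by simp [TreeEquiv])
    | node l' r' =>
      rcases h with ⟨h1, h2⟩ | ⟨h1, h2⟩
      · simp [minLeaf, ihl h1, ihr h2]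
      · simp [minLeaf, ihl h1, ihr h2, min_comm]

lemma equiv_nodeLabel : ∀ {T U : BTree}, TreeEquiv T U → nodeLabel T = nodeLabel U := by
  intro T U h
  cases T with
  | leaf j => rw [equiv_leaf_right h]
  | node l r =>
    cases U with
    | leaf j => exact absurd h (by simp [TreeEquiv])
    | node l' r' =>
      rcases h with ⟨h1, h2⟩ | ⟨h1, h2⟩
      · simp [nodeLabel, equiv_min h1, equiv_min h2]
      · simp [nodeLabel, equiv_min h1, equiv_min h2, max_comm]

end OLAAux
namespace OLAAux
open BTree

lemma equiv_delete (i : ℕ) : ∀ {T U : BTree}, (leafMultiset T).Nodup → TreeEquiv T U →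
    (deleteLeaf i T = none ∧ deleteLeaf i U = none) ∨
    ∃ a T₁ U₁, deleteLeaf i T = some (a, T₁) ∧ deleteLeaf i U = some (a, U₁) ∧
      TreeEquiv T₁ U₁ := by
  intro T
  induction T with
  | leaf j =>
    intro U _ h
    rw [equiv_leaf_right h]
    exact Or.inl ⟨rfl, rfl⟩
  | node l r ihl ihr =>
    intro U hnd h
    cases U with
    | leaf j => exact absurd h (by simp [TreeEquiv])
    | node l' r' =>
      simp only [leafMultiset] at hnd
      rw [Multiset.nodup_add] at hnd
      obtain ⟨ndl, ndr, disj⟩ := hnd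
      rcases h with ⟨h1, h2⟩ | ⟨h1, h2⟩
      · -- parallel: l ≡ l', r ≡ r'
        by_cases hl : l = leaf i
        · have hl' : l' = leaf i := equiv_leaf_right (hl ▸ h1)
          refine Or.inr ⟨nodeLabel r, r, r', ?_, ?_, h2⟩
          · rw [delete_node_eq, if_pos hl]
          · rw [delete_node_eq, if_pos hl', equiv_nodeLabel h2]
        have hl' : l' ≠ leaf i := fun hc => hl (equiv_leaf_left (hc ▸ h1))
        by_cases hr : r = leaf i
        · have hr' : r' = leaf i := equiv_leaf_right (hr ▸ h2)
          refine Or.inr ⟨nodeLabel l, l, l', ?_, ?_, h1⟩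
          · rw [delete_node_eq, if_neg hl, if_pos hr]
          · rw [delete_node_eq, if_neg hl', if_pos hr', equiv_nodeLabel h1]
        have hr' : r' ≠ leaf i := fun hc => hr (equiv_leaf_left (hc ▸ h2))
        rcases ihl ndl h1 with ⟨hdl, hdl'⟩ | ⟨a, l₁, l₁', hdl, hdl', he⟩
        · rcases ihr ndr h2 with ⟨hdr, hdr'⟩ | ⟨a, r₁, r₁', hdr, hdr', he⟩
          · exact Or.inl ⟨by simp [delete_node_eq, if_neg hl, if_neg hr, hdl, hdr],
              by simp [delete_node_eq, if_neg hl', if_neg hr', hdl', hdr']⟩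
          · exact Or.inr ⟨a, node l r₁, node l' r₁',
              by simp [delete_node_eq, if_neg hl, if_neg hr, hdl, hdr],
              by simp [delete_node_eq, if_neg hl', if_neg hr', hdl', hdr'],
              Or.inl ⟨h1, he⟩⟩
        · exact Or.inr ⟨a, node l₁ r, node l₁' r',
            by simp [delete_node_eq, if_neg hl, if_neg hr, hdl],
            by simp [delete_node_eq, if_neg hl', if_neg hr', hdl'],
            Or.inl ⟨he, h2⟩⟩
      · -- crossed: l ≡ r', r ≡ l'
        by_cases hl : l = leaf i
        · have hr' : r' = leaf i := equiv_leaf_right (hl ▸ h1)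
          have hr : r ≠ leaf i := by
            rintro rfl
            rw [hl] at disj
            exact Multiset.disjoint_left.mp disj
              (show i ∈ BTree.leafMultiset (leaf i) by simp [leafMultiset])
              (by simp [leafMultiset])
          have hl' : l' ≠ leaf i := fun hc => hr (equiv_leaf_left (hc ▸ h2))
          refine Or.inr ⟨nodeLabel r, r, l', ?_, ?_, h2⟩
          · rw [delete_node_eq, if_pos hl]
          · rw [delete_node_eq, if_neg hl', if_pos hr', equiv_nodeLabel h2]
        by_cases hr : r = leaf i
        · have hl'' : l' = leaf i := equiv_leaf_right (hr ▸ h2)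
          have hr'' : r' ≠ leaf i := fun hc => hl (equiv_leaf_left (hc ▸ h1))
          refine Or.inr ⟨nodeLabel l, l, r', ?_, ?_, h1⟩
          · rw [delete_node_eq, if_neg hl, if_pos hr]
          · rw [delete_node_eq, if_pos hl'', equiv_nodeLabel h1]
        have hl' : l' ≠ leaf i := fun hc => hr (equiv_leaf_left (hc ▸ h2))
        have hr' : r' ≠ leaf i := fun hc => hl (equiv_leaf_left (hc ▸ h1))
        rcases ihl ndl h1 with ⟨hdl, hdr'⟩ | ⟨a, l₁, r₁', hdl, hdr', he⟩
        · rcases ihr ndr h2 with ⟨hdr, hdl'⟩ | ⟨a, r₁, l₁', hdr, hdl', he⟩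
          · exact Or.inl ⟨by simp [delete_node_eq, if_neg hl, if_neg hr, hdl, hdr],
              by simp [delete_node_eq, if_neg hl', if_neg hr', hdl', hdr']⟩
          · exact Or.inr ⟨a, node l r₁, node l₁' r',
              by simp [delete_node_eq, if_neg hl, if_neg hr, hdl, hdr],
              by simp [delete_node_eq, if_neg hl', if_neg hr', hdl'],
              Or.inr ⟨h1, he⟩⟩
        · have hinl : i ∈ leafMultiset l := D_mem hdl
          have hinr : i ∉ leafMultiset r := fun hc =>
            Multiset.disjoint_left.mp disj hinl hc
          have hinl' : i ∉ leafMultiset l' := by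
            rw [← equiv_ms h2]; exact hinr
          exact Or.inr ⟨a, node l₁ r, node l' r₁',
            by simp [delete_node_eq, if_neg hl, if_neg hr, hdl],
            by simp [delete_node_eq, if_neg hl', if_neg hr', D0 hinl', hdr'],
            Or.inr ⟨he, h2⟩⟩

lemma equiv_encodeAux : ∀ (m : ℕ) {T U : BTree}, (leafMultiset T).Nodup →
    TreeEquiv T U → olaEncodeAux m T = olaEncodeAux m U := by
  intro m
  induction m with
  | zero => intro T U _ _; rfl
  | succ m ih =>
    intro T U hnd h
    rcases equiv_delete (m+1) hnd h with ⟨h1, h2⟩ | ⟨a, T₁, U₁, h1, h2, he⟩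
    · simp [olaEncodeAux, h1, h2]
    · simp only [olaEncodeAux, h1, h2]
      rw [ih (by rw [D_ms h1]; exact hnd.erase _) he]

end OLAAux
namespace OLAAux
open BTree

/-- Multiset of leaf labels appearing in a context. -/
def ctxMS : Ctx → Multiset ℕ
  | .hole => 0
  | .left c r => ctxMS c + leafMultiset r
  | .right l c => leafMultiset l + ctxMS c

lemma fill_ms : ∀ (c : Ctx) (S : BTree),
    leafMultiset (Ctx.fill c S) = ctxMS c + leafMultiset S := by
  intro c
  induction c with
  | hole => intro S; simp [Ctx.fill, ctxMS]
  | left c r ih =>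
    intro S; simp only [Ctx.fill, leafMultiset, ctxMS, ih]; exact add_right_comm _ _ _
  | right l c ih =>
    intro S; simp only [Ctx.fill, leafMultiset, ctxMS, ih]; exact (add_assoc _ _ _).symm

lemma fill_min : ∀ (c : Ctx) {S S' : BTree}, minLeaf S = minLeaf S' →
    minLeaf (Ctx.fill c S) = minLeaf (Ctx.fill c S') := by
  intro c
  induction c with
  | hole => intro S S' h; exact h
  | left c r ih => intro S S' h; simp only [Ctx.fill, minLeaf, ih h]
  | right l c ih => intro S S' h; simp only [Ctx.fill, minLeaf, ih h]

lemma fill_notleaf : ∀ (c : Ctx) {S : BTree}, (∀ j, S ≠ leaf j) →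
    ∀ j, Ctx.fill c S ≠ leaf j := by
  intro c
  cases c with
  | hole => intro S h j; exact h j
  | left c r => intro S _ j h; exact BTree.noConfusion h
  | right l c => intro S _ j h; exact BTree.noConfusion h

lemma fill_nodeLabel : ∀ (c : Ctx), c ≠ Ctx.hole → ∀ {S S' : BTree},
    minLeaf S = minLeaf S' → nodeLabel (Ctx.fill c S) = nodeLabel (Ctx.fill c S') := by
  intro c hc S S' h
  cases c with
  | hole => exact absurd rfl hc
  | left c r => simp only [Ctx.fill, nodeLabel, fill_min c h]
  | right l c => simp only [Ctx.fill, nodeLabel, fill_min c h]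

lemma fill_equiv : ∀ (c : Ctx) {S S' : BTree}, TreeEquiv S S' →
    TreeEquiv (Ctx.fill c S) (Ctx.fill c S') := by
  intro c
  induction c with
  | hole => intro S S' h; exact h
  | left c r ih => intro S S' h; exact Or.inl ⟨ih h, equiv_refl r⟩
  | right l c ih => intro S S' h; exact Or.inl ⟨equiv_refl l, ih h⟩

lemma DFILL {i : ℕ} : ∀ (c : Ctx) {S S' : BTree} {a : ℤ}, i ∉ ctxMS c →
    deleteLeaf i S = some (a, S') → (∀ j, S ≠ leaf j) →
    deleteLeaf i (Ctx.fill c S) = some (a, Ctx.fill c S') := by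
  intro c
  induction c with
  | hole => intro S S' a _ h _; exact h
  | left c r ih =>
    intro S S' a hni h hS
    simp only [ctxMS, Multiset.mem_add, not_or] at hni
    have h1 : Ctx.fill c S ≠ leaf i := fill_notleaf c hS i
    have h2 : r ≠ leaf i := notleaf hni.2
    simp [Ctx.fill, delete_node_eq, if_neg h1, if_neg h2, ih hni.1 h hS]
  | right l c ih =>
    intro S S' a hni h hS
    simp only [ctxMS, Multiset.mem_add, not_or] at hni
    have h1 : l ≠ leaf i := notleaf hni.1
    have h2 : Ctx.fill c S ≠ leaf i := fill_notleaf c hS i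
    simp [Ctx.fill, delete_node_eq, if_neg h1, if_neg h2, D0 hni.1, ih hni.2 h hS]

lemma FILLDEL {i : ℕ} : ∀ (c : Ctx) {S₁ S₂ : BTree},
    (∀ j, S₁ ≠ leaf j) → (∀ j, S₂ ≠ leaf j) → minLeaf S₁ = minLeaf S₂ →
    i ∉ leafMultiset S₁ → i ∉ leafMultiset S₂ → i ∈ ctxMS c →
    ∃ c' a₁ a₂, deleteLeaf i (Ctx.fill c S₁) = some (a₁, Ctx.fill c' S₁) ∧
      deleteLeaf i (Ctx.fill c S₂) = some (a₂, Ctx.fill c' S₂) ∧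
      ctxMS c' = (ctxMS c).erase i ∧
      (a₁ = a₂ ∨ (a₁ = nodeLabel S₁ ∧ a₂ = nodeLabel S₂)) := by
  intro c
  induction c with
  | hole => intro S₁ S₂ _ _ _ _ _ hmem; simp [ctxMS] at hmem
  | left c r ih =>
    intro S₁ S₂ hS₁ hS₂ hmin hi₁ hi₂ hmem
    have hf₁ : Ctx.fill c S₁ ≠ leaf i := fill_notleaf c hS₁ i
    have hf₂ : Ctx.fill c S₂ ≠ leaf i := fill_notleaf c hS₂ i
    by_cases hr : r = leaf i
    · -- sister of leaf i is the filled subtree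
      refine ⟨c, nodeLabel (Ctx.fill c S₁), nodeLabel (Ctx.fill c S₂), ?_, ?_, ?_, ?_⟩
      · simp [Ctx.fill, delete_node_eq, if_neg hf₁, if_pos hr]
      · simp [Ctx.fill, delete_node_eq, if_neg hf₂, if_pos hr]
      · subst hr
        simp only [ctxMS, leafMultiset]
        rw [Multiset.erase_add_right_pos _ (Multiset.mem_singleton_self i)]
        simp
      · by_cases hc : c = Ctx.hole
        · subst hc; exact Or.inr ⟨rfl, rfl⟩
        · exact Or.inl (fill_nodeLabel c hc hmin)
    · simp only [ctxMS, Multiset.mem_add] at hmem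
      by_cases hmc : i ∈ ctxMS c
      · obtain ⟨c', a₁, a₂, hd₁, hd₂, hcm, hcase⟩ := ih hS₁ hS₂ hmin hi₁ hi₂ hmc
        refine ⟨.left c' r, a₁, a₂, ?_, ?_, ?_, hcase⟩
        · simp [Ctx.fill, delete_node_eq, if_neg hf₁, if_neg hr, hd₁]
        · simp [Ctx.fill, delete_node_eq, if_neg hf₂, if_neg hr, hd₂]
        · simp only [ctxMS, hcm, Multiset.erase_add_left_pos _ hmc]
      · have hir : i ∈ leafMultiset r := by tauto
        obtain ⟨⟨a, r'⟩, hdr⟩ := D_exists hr hir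
        have hn₁ : deleteLeaf i (Ctx.fill c S₁) = none := by
          apply D0; rw [fill_ms]; simp only [Multiset.mem_add]; tauto
        have hn₂ : deleteLeaf i (Ctx.fill c S₂) = none := by
          apply D0; rw [fill_ms]; simp only [Multiset.mem_add]; tauto
        refine ⟨.left c r', a, a, ?_, ?_, ?_, Or.inl rfl⟩
        · simp [Ctx.fill, delete_node_eq, if_neg hf₁, if_neg hr, hn₁, hdr]
        · simp [Ctx.fill, delete_node_eq, if_neg hf₂, if_neg hr, hn₂, hdr]
        · simp only [ctxMS, D_ms hdr, Multiset.erase_add_right_pos _ hir]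
  | right l c ih =>
    intro S₁ S₂ hS₁ hS₂ hmin hi₁ hi₂ hmem
    have hf₁ : Ctx.fill c S₁ ≠ leaf i := fill_notleaf c hS₁ i
    have hf₂ : Ctx.fill c S₂ ≠ leaf i := fill_notleaf c hS₂ i
    by_cases hl : l = leaf i
    · refine ⟨c, nodeLabel (Ctx.fill c S₁), nodeLabel (Ctx.fill c S₂), ?_, ?_, ?_, ?_⟩
      · simp [Ctx.fill, delete_node_eq, if_pos hl]
      · simp [Ctx.fill, delete_node_eq, if_pos hl]
      · subst hl
        simp only [ctxMS, leafMultiset]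
        rw [Multiset.erase_add_left_pos _ (Multiset.mem_singleton_self i)]
        simp
      · by_cases hc : c = Ctx.hole
        · subst hc; exact Or.inr ⟨rfl, rfl⟩
        · exact Or.inl (fill_nodeLabel c hc hmin)
    · simp only [ctxMS, Multiset.mem_add] at hmem
      by_cases hml : i ∈ leafMultiset l
      · obtain ⟨⟨a, l'⟩, hdl⟩ := D_exists hl hml
        refine ⟨.right l' c, a, a, ?_, ?_, ?_, Or.inl rfl⟩
        · simp [Ctx.fill, delete_node_eq, if_neg hl, if_neg hf₁, hdl]
        · simp [Ctx.fill, delete_node_eq, if_neg hl, if_neg hf₂, hdl]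
        · simp only [ctxMS, D_ms hdl, Multiset.erase_add_left_pos _ hml]
      · have hmc : i ∈ ctxMS c := by tauto
        obtain ⟨c', a₁, a₂, hd₁, hd₂, hcm, hcase⟩ := ih hS₁ hS₂ hmin hi₁ hi₂ hmc
        refine ⟨.right l c', a₁, a₂, ?_, ?_, ?_, hcase⟩
        · simp [Ctx.fill, delete_node_eq, if_neg hl, if_neg hf₁, D0 hml, hd₁]
        · simp [Ctx.fill, delete_node_eq, if_neg hl, if_neg hf₂, D0 hml, hd₂]
        · simp only [ctxMS, hcm, Multiset.erase_add_right_pos _ hmc]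

end OLAAux
namespace OLAAux
open BTree

lemma zip_self_countP (l : List ℤ) :
    (l.zip l).countP (fun p => decide (p.1 ≠ p.2)) = 0 := by
  induction l with
  | nil => rfl
  | cons x l ih => rw [List.zip_cons_cons, List.countP_cons, ih]; simp

lemma step_bound {t₁ t₂ : List ℤ} {x y kk : ℤ} (hlen : t₁.length = t₂.length)
    (h : (t₁.zip t₂).countP (fun p => decide (p.1 ≠ p.2)) ≤ 1 + t₁.count kk)
    (hcase : x = y ∨ x = kk) :
    ((t₁ ++ [x]).zip (t₂ ++ [y])).countP (fun p => decide (p.1 ≠ p.2))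
      ≤ 1 + (t₁ ++ [x]).count kk := by
  rw [List.zip_append hlen, List.countP_append, List.count_append]
  have hz : ([x].zip [y]) = [(x, y)] := rfl
  rw [hz]
  rcases hcase with rfl | rfl
  · have h0 : List.countP (fun p => decide (p.1 ≠ p.2)) [(x, x)] = 0 := by simp
    rw [h0]
    omega
  · have h1 : List.count x [x] = 1 := by simp
    have h2 : List.countP (fun p => decide (p.1 ≠ p.2)) [(x, y)] ≤ 1 :=
      le_trans List.countP_le_length (by simp)
    omega

lemma step_bound2 {t : List ℤ} {x y kk : ℤ} :
    ((t ++ [x]).zip (t ++ [y])).countP (fun p => decide (p.1 ≠ p.2))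
      ≤ 1 + (t ++ [x]).count kk := by
  rw [List.zip_append rfl, List.countP_append]
  have hz : ([x].zip [y]) = [(x, y)] := rfl
  rw [hz, zip_self_countP]
  have h2 : List.countP (fun p => decide (p.1 ≠ p.2)) [(x, y)] ≤ 1 :=
    le_trans List.countP_le_length (by simp)
  omega

end OLAAux
namespace OLAAux
open BTree

lemma core (m : ℕ) : ∀ (c : Ctx) (A B C : BTree) (k : ℕ),
    max (min (minLeaf A) (minLeaf B)) (minLeaf C) = k →
    (leafMultiset (Ctx.fill c (node (node A B) C))).Nodup →
    (∀ x ∈ leafMultiset (Ctx.fill c (node (node A B) C)), x ≤ m) →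
    ((olaEncodeAux m (Ctx.fill c (node (node A B) C))).zip
        (olaEncodeAux m (Ctx.fill c (node (node A C) B)))).countP
        (fun p => decide (p.1 ≠ p.2))
      ≤ 1 + (olaEncodeAux m (Ctx.fill c (node (node A B) C))).count (-(k : ℤ)) := by
  induction m with
  | zero => intro c A B C k _ _ _; simp [olaEncodeAux]
  | succ m ih =>
    intro c A B C k hk hnd hbd
    have hS₁ne : ∀ j, node (node A B) C ≠ leaf j := fun j h => BTree.noConfusion h
    have hS₂ne : ∀ j, node (node A C) B ≠ leaf j := fun j h => BTree.noConfusion h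
    have hmsS : leafMultiset (node (node A C) B) = leafMultiset (node (node A B) C) := by
      simp only [leafMultiset]; exact add_right_comm _ _ _
    have hminS : minLeaf (node (node A B) C) = minLeaf (node (node A C) B) := by
      simp only [minLeaf]; exact min_right_comm _ _ _
    have hmsfull : leafMultiset (Ctx.fill c (node (node A C) B))
        = leafMultiset (Ctx.fill c (node (node A B) C)) := by
      rw [fill_ms, fill_ms, hmsS]
    by_cases hi : (m+1) ∈ leafMultiset (Ctx.fill c (node (node A B) C))
    case neg =>
      have h1 := D0 hi
      have h2 := D0 (show (m+1) ∉ leafMultiset (Ctx.fill c (node (node A C) B)) by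
        rw [hmsfull]; exact hi)
      simp [olaEncodeAux, h1, h2]
    case pos =>
    have hndf := hnd
    rw [fill_ms] at hndf
    obtain ⟨ndc, ndS, disjCS⟩ := Multiset.nodup_add.mp hndf
    have hi' := hi; rw [fill_ms] at hi'
    rcases Multiset.mem_add.mp hi' with hic | hiS
    · -- deleted leaf lives in the context
      have hiS₁ : (m+1) ∉ leafMultiset (node (node A B) C) :=
        fun h => Multiset.disjoint_left.mp disjCS hic h
      have hiS₂ : (m+1) ∉ leafMultiset (node (node A C) B) := by rw [hmsS]; exact hiS₁
      obtain ⟨c', a₁, a₂, hd₁, hd₂, hcm, hcase⟩ :=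
        FILLDEL c hS₁ne hS₂ne hminS hiS₁ hiS₂ hic
      have e₁ : leafMultiset (Ctx.fill c' (node (node A B) C))
          = (leafMultiset (Ctx.fill c (node (node A B) C))).erase (m+1) := by
        rw [fill_ms, fill_ms, hcm, Multiset.erase_add_left_pos _ hic]
      have nd' : (leafMultiset (Ctx.fill c' (node (node A B) C))).Nodup := by
        rw [e₁]; exact hnd.erase _
      have bd' : ∀ x ∈ leafMultiset (Ctx.fill c' (node (node A B) C)), x ≤ m := by
        intro x hx
        rw [e₁] at hx
        obtain ⟨hne, hmem⟩ := (hnd.mem_erase_iff).mp hx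
        have := hbd x hmem
        omega
      have hlen : (olaEncodeAux m (Ctx.fill c' (node (node A B) C))).length
          = (olaEncodeAux m (Ctx.fill c' (node (node A C) B))).length :=
        LEN m _ _ (by rw [fill_ms, fill_ms, hmsS])
      simp only [olaEncodeAux, hd₁, hd₂]
      apply step_bound hlen (ih c' A B C k hk nd' bd')
      rcases hcase with h | ⟨h1, _⟩
      · exact Or.inl h
      · refine Or.inr ?_
        rw [h1]
        show nodeLabel (node (node A B) C) = -(k : ℤ)
        simp only [nodeLabel, minLeaf]
        rw [← Nat.cast_max, hk]
    · -- deleted leaf lives in S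
      have hictx : (m+1) ∉ ctxMS c := fun h => Multiset.disjoint_left.mp disjCS h hiS
      have ndS' := ndS
      simp only [leafMultiset] at ndS'
      obtain ⟨ndAB, ndC, disjABC⟩ := Multiset.nodup_add.mp ndS'
      obtain ⟨ndA, ndB, disjAB⟩ := Multiset.nodup_add.mp ndAB
      have hiS' := hiS
      simp only [leafMultiset, Multiset.mem_add] at hiS'
      have hbS : ∀ x ∈ leafMultiset (node (node A B) C), x ≤ m + 1 := by
        intro x hx; apply hbd; rw [fill_ms]; exact Multiset.mem_add.mpr (Or.inr hx)
      rcases hiS' with (hiA | hiB) | hiC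
      · -- i in A
        have hiAB : (m+1) ∈ leafMultiset A + leafMultiset B :=
          Multiset.mem_add.mpr (Or.inl hiA)
        have hnB : (m+1) ∉ leafMultiset B := fun h => Multiset.disjoint_left.mp disjAB hiA h
        have hnC : (m+1) ∉ leafMultiset C := fun h => Multiset.disjoint_left.mp disjABC hiAB h
        have hBne := notleaf hnB
        have hCne := notleaf hnC
        cases A with
        | leaf aj =>
          have haj : m+1 = aj := by simpa [leafMultiset] using hiA
          subst haj
          have hdS₁ : deleteLeaf (m+1) (node (node (leaf (m+1)) B) C)
              = some (nodeLabel B, node B C) := by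
            rw [delete_node_eq,
              if_neg (show node (leaf (m+1)) B ≠ leaf (m+1) from fun h => BTree.noConfusion h),
              if_neg hCne, delete_node_eq, if_pos rfl]
          have hdS₂ : deleteLeaf (m+1) (node (node (leaf (m+1)) C) B)
              = some (nodeLabel C, node C B) := by
            rw [delete_node_eq,
              if_neg (show node (leaf (m+1)) C ≠ leaf (m+1) from fun h => BTree.noConfusion h),
              if_neg hBne, delete_node_eq, if_pos rfl]
          have hf₁ := DFILL c hictx hdS₁ hS₁ne
          have hf₂ := DFILL c hictx hdS₂ hS₂ne
          have hkey : leafMultiset (Ctx.fill c (node B C))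
              = (leafMultiset (Ctx.fill c (node (node (leaf (m+1)) B) C))).erase (m+1) := by
            rw [fill_ms, fill_ms, Multiset.erase_add_right_pos _ hiS]
            congr 1
            show leafMultiset B + leafMultiset C
              = (leafMultiset (leaf (m+1)) + leafMultiset B + leafMultiset C).erase (m+1)
            rw [Multiset.erase_add_left_pos _ hiAB, Multiset.erase_add_left_pos _ hiA]
            show leafMultiset B + leafMultiset C
              = ({m+1} : Multiset ℕ).erase (m+1) + leafMultiset B + leafMultiset C
            rw [Multiset.erase_singleton, zero_add]
          have ndk : (leafMultiset (Ctx.fill c (node B C))).Nodup := by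
            rw [hkey]; exact hnd.erase _
          have hequivtail : olaEncodeAux m (Ctx.fill c (node B C))
              = olaEncodeAux m (Ctx.fill c (node C B)) :=
            equiv_encodeAux m ndk (fill_equiv c (Or.inr ⟨equiv_refl B, equiv_refl C⟩))
          simp only [olaEncodeAux, hf₁, hf₂, ← hequivtail]
          exact step_bound2
        | node p q =>
          have hAne : node p q ≠ leaf (m+1) := fun h => BTree.noConfusion h
          obtain ⟨⟨a, A'⟩, hdA⟩ := D_exists hAne hiA
          have hex : ∃ x, x ∈ (leafMultiset (node p q)).erase (m+1) := by
            apply Multiset.card_pos_iff_exists_mem.mp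
            rw [Multiset.card_erase_of_mem hiA, Nat.pred_eq_sub_one, ms_card]
            have := numLeaves_pos p
            have := numLeaves_pos q
            simp only [numLeaves]
            omega
          obtain ⟨x, hx⟩ := hex
          obtain ⟨hxne, hxmem⟩ := ndA.mem_erase_iff.mp hx
          have hxle : x ≤ m + 1 := hbS x
            (Multiset.mem_add.mpr (Or.inl (Multiset.mem_add.mpr (Or.inl hxmem))))
          have hminlt : minLeaf (node p q) < m + 1 := by
            have := minLeaf_le (node p q) x hxmem; omega
          have hminA' : minLeaf A' = minLeaf (node p q) := D_min hdA hminlt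
          have hdS₁ : deleteLeaf (m+1) (node (node (node p q) B) C)
              = some (a, node (node A' B) C) := by
            rw [delete_node_eq,
              if_neg (show node (node p q) B ≠ leaf (m+1) from fun h => BTree.noConfusion h),
              if_neg hCne, delete_node_eq, if_neg hAne, if_neg hBne, hdA]
          have hdS₂ : deleteLeaf (m+1) (node (node (node p q) C) B)
              = some (a, node (node A' C) B) := by
            rw [delete_node_eq,
              if_neg (show node (node p q) C ≠ leaf (m+1) from fun h => BTree.noConfusion h),
              if_neg hBne, delete_node_eq, if_neg hAne, if_neg hCne, hdA]
          have hf₁ := DFILL c hictx hdS₁ hS₁ne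
          have hf₂ := DFILL c hictx hdS₂ hS₂ne
          have hkey : leafMultiset (Ctx.fill c (node (node A' B) C))
              = (leafMultiset (Ctx.fill c (node (node (node p q) B) C))).erase (m+1) := by
            rw [fill_ms, fill_ms, Multiset.erase_add_right_pos _ hiS]
            congr 1
            show leafMultiset A' + leafMultiset B + leafMultiset C
              = (leafMultiset (node p q) + leafMultiset B + leafMultiset C).erase (m+1)
            rw [Multiset.erase_add_left_pos _ hiAB, Multiset.erase_add_left_pos _ hiA,
              ← D_ms hdA]
          have nd' : (leafMultiset (Ctx.fill c (node (node A' B) C))).Nodup := by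
            rw [hkey]; exact hnd.erase _
          have bd' : ∀ x ∈ leafMultiset (Ctx.fill c (node (node A' B) C)), x ≤ m := by
            intro y hy
            rw [hkey] at hy
            obtain ⟨hne, hmem⟩ := (hnd.mem_erase_iff).mp hy
            have := hbd y hmem
            omega
          have hk' : max (min (minLeaf A') (minLeaf B)) (minLeaf C) = k := by
            rw [hminA']; exact hk
          have hlen := LEN m (Ctx.fill c (node (node A' B) C)) (Ctx.fill c (node (node A' C) B))
            (by rw [fill_ms, fill_ms]
                congr 1
                show leafMultiset A' + leafMultiset B + leafMultiset C
                  = leafMultiset A' + leafMultiset C + leafMultiset B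
                exact add_right_comm _ _ _)
          simp only [olaEncodeAux, hf₁, hf₂]
          exact step_bound hlen (ih c A' B C k hk' nd' bd') (Or.inl rfl)
      · -- i in B
        have hiAB : (m+1) ∈ leafMultiset A + leafMultiset B :=
          Multiset.mem_add.mpr (Or.inr hiB)
        have hnA : (m+1) ∉ leafMultiset A := fun h => Multiset.disjoint_left.mp disjAB h hiB
        have hnC : (m+1) ∉ leafMultiset C := fun h => Multiset.disjoint_left.mp disjABC hiAB h
        have hAne := notleaf hnA
        have hCne := notleaf hnC
        cases B with
        | leaf bj =>
          have hbj : m+1 = bj := by simpa [leafMultiset] using hiB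
          subst hbj
          have hdS₁ : deleteLeaf (m+1) (node (node A (leaf (m+1))) C)
              = some (nodeLabel A, node A C) := by
            rw [delete_node_eq,
              if_neg (show node A (leaf (m+1)) ≠ leaf (m+1) from fun h => BTree.noConfusion h),
              if_neg hCne, delete_node_eq, if_neg hAne, if_pos rfl]
          have hdS₂ : deleteLeaf (m+1) (node (node A C) (leaf (m+1)))
              = some (nodeLabel (node A C), node A C) := by
            rw [delete_node_eq,
              if_neg (show node A C ≠ leaf (m+1) from fun h => BTree.noConfusion h),
              if_pos rfl]
          have hf₁ := DFILL c hictx hdS₁ hS₁ne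
          have hf₂ := DFILL c hictx hdS₂ hS₂ne
          simp only [olaEncodeAux, hf₁, hf₂]
          exact step_bound2
        | node p q =>
          have hBne : node p q ≠ leaf (m+1) := fun h => BTree.noConfusion h
          obtain ⟨⟨b, B'⟩, hdB⟩ := D_exists hBne hiB
          have hex : ∃ x, x ∈ (leafMultiset (node p q)).erase (m+1) := by
            apply Multiset.card_pos_iff_exists_mem.mp
            rw [Multiset.card_erase_of_mem hiB, Nat.pred_eq_sub_one, ms_card]
            have := numLeaves_pos p
            have := numLeaves_pos q
            simp only [numLeaves]
            omega
          obtain ⟨x, hx⟩ := hex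
          obtain ⟨hxne, hxmem⟩ := ndB.mem_erase_iff.mp hx
          have hxle : x ≤ m + 1 := hbS x
            (Multiset.mem_add.mpr (Or.inl (Multiset.mem_add.mpr (Or.inr hxmem))))
          have hminlt : minLeaf (node p q) < m + 1 := by
            have := minLeaf_le (node p q) x hxmem; omega
          have hminB' : minLeaf B' = minLeaf (node p q) := D_min hdB hminlt
          have hdS₁ : deleteLeaf (m+1) (node (node A (node p q)) C)
              = some (b, node (node A B') C) := by
            rw [delete_node_eq,
              if_neg (show node A (node p q) ≠ leaf (m+1) from fun h => BTree.noConfusion h),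
              if_neg hCne, delete_node_eq, if_neg hAne, if_neg hBne, D0 hnA, hdB]
          have hdS₂ : deleteLeaf (m+1) (node (node A C) (node p q))
              = some (b, node (node A C) B') := by
            rw [delete_node_eq,
              if_neg (show node A C ≠ leaf (m+1) from fun h => BTree.noConfusion h),
              if_neg hBne, delete_node_eq, if_neg hAne, if_neg hCne, D0 hnA, D0 hnC, hdB]
          have hf₁ := DFILL c hictx hdS₁ hS₁ne
          have hf₂ := DFILL c hictx hdS₂ hS₂ne
          have hkey : leafMultiset (Ctx.fill c (node (node A B') C))
              = (leafMultiset (Ctx.fill c (node (node A (node p q)) C))).erase (m+1) := by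
            rw [fill_ms, fill_ms, Multiset.erase_add_right_pos _ hiS]
            congr 1
            show leafMultiset A + leafMultiset B' + leafMultiset C
              = (leafMultiset A + leafMultiset (node p q) + leafMultiset C).erase (m+1)
            rw [Multiset.erase_add_left_pos _ hiAB, Multiset.erase_add_right_pos _ hiB,
              ← D_ms hdB]
          have nd' : (leafMultiset (Ctx.fill c (node (node A B') C))).Nodup := by
            rw [hkey]; exact hnd.erase _
          have bd' : ∀ x ∈ leafMultiset (Ctx.fill c (node (node A B') C)), x ≤ m := by
            intro y hy
            rw [hkey] at hy
            obtain ⟨hne, hmem⟩ := (hnd.mem_erase_iff).mp hy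
            have := hbd y hmem
            omega
          have hk' : max (min (minLeaf A) (minLeaf B')) (minLeaf C) = k := by
            rw [hminB']; exact hk
          have hlen := LEN m (Ctx.fill c (node (node A B') C)) (Ctx.fill c (node (node A C) B'))
            (by rw [fill_ms, fill_ms]
                congr 1
                show leafMultiset A + leafMultiset B' + leafMultiset C
                  = leafMultiset A + leafMultiset C + leafMultiset B'
                exact add_right_comm _ _ _)
          simp only [olaEncodeAux, hf₁, hf₂]
          exact step_bound hlen (ih c A B' C k hk' nd' bd') (Or.inl rfl)
      · -- i in C
        have hnAB : (m+1) ∉ leafMultiset A + leafMultiset B :=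
          fun h => Multiset.disjoint_left.mp disjABC h hiC
        have hnA : (m+1) ∉ leafMultiset A := fun h => hnAB (Multiset.mem_add.mpr (Or.inl h))
        have hnB : (m+1) ∉ leafMultiset B := fun h => hnAB (Multiset.mem_add.mpr (Or.inr h))
        have hAne := notleaf hnA
        have hBne := notleaf hnB
        cases C with
        | leaf cj =>
          have hcj : m+1 = cj := by simpa [leafMultiset] using hiC
          subst hcj
          have hdS₁ : deleteLeaf (m+1) (node (node A B) (leaf (m+1)))
              = some (nodeLabel (node A B), node A B) := by
            rw [delete_node_eq,
              if_neg (show node A B ≠ leaf (m+1) from fun h => BTree.noConfusion h),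
              if_pos rfl]
          have hdS₂ : deleteLeaf (m+1) (node (node A (leaf (m+1))) B)
              = some (nodeLabel A, node A B) := by
            rw [delete_node_eq,
              if_neg (show node A (leaf (m+1)) ≠ leaf (m+1) from fun h => BTree.noConfusion h),
              if_neg hBne, delete_node_eq, if_neg hAne, if_pos rfl]
          have hf₁ := DFILL c hictx hdS₁ hS₁ne
          have hf₂ := DFILL c hictx hdS₂ hS₂ne
          simp only [olaEncodeAux, hf₁, hf₂]
          exact step_bound2
        | node p q =>
          have hCne : node p q ≠ leaf (m+1) := fun h => BTree.noConfusion h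
          obtain ⟨⟨cl, C'⟩, hdC⟩ := D_exists hCne hiC
          have hex : ∃ x, x ∈ (leafMultiset (node p q)).erase (m+1) := by
            apply Multiset.card_pos_iff_exists_mem.mp
            rw [Multiset.card_erase_of_mem hiC, Nat.pred_eq_sub_one, ms_card]
            have := numLeaves_pos p
            have := numLeaves_pos q
            simp only [numLeaves]
            omega
          obtain ⟨x, hx⟩ := hex
          obtain ⟨hxne, hxmem⟩ := ndC.mem_erase_iff.mp hx
          have hxle : x ≤ m + 1 := hbS x
            (Multiset.mem_add.mpr (Or.inr hxmem))
          have hminlt : minLeaf (node p q) < m + 1 := by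
            have := minLeaf_le (node p q) x hxmem; omega
          have hminC' : minLeaf C' = minLeaf (node p q) := D_min hdC hminlt
          have hdS₁ : deleteLeaf (m+1) (node (node A B) (node p q))
              = some (cl, node (node A B) C') := by
            rw [delete_node_eq,
              if_neg (show node A B ≠ leaf (m+1) from fun h => BTree.noConfusion h),
              if_neg hCne, delete_node_eq, if_neg hAne, if_neg hBne, D0 hnA, D0 hnB, hdC]
          have hdS₂ : deleteLeaf (m+1) (node (node A (node p q)) B)
              = some (cl, node (node A C') B) := by
            rw [delete_node_eq,
              if_neg (show node A (node p q) ≠ leaf (m+1) from fun h => BTree.noConfusion h),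
              if_neg hBne, delete_node_eq, if_neg hAne, if_neg hCne, D0 hnA, hdC]
          have hf₁ := DFILL c hictx hdS₁ hS₁ne
          have hf₂ := DFILL c hictx hdS₂ hS₂ne
          have hkey : leafMultiset (Ctx.fill c (node (node A B) C'))
              = (leafMultiset (Ctx.fill c (node (node A B) (node p q)))).erase (m+1) := by
            rw [fill_ms, fill_ms, Multiset.erase_add_right_pos _ hiS]
            congr 1
            show leafMultiset A + leafMultiset B + leafMultiset C'
              = (leafMultiset A + leafMultiset B + leafMultiset (node p q)).erase (m+1)
            rw [Multiset.erase_add_right_pos _ hiC, ← D_ms hdC]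
          have nd' : (leafMultiset (Ctx.fill c (node (node A B) C'))).Nodup := by
            rw [hkey]; exact hnd.erase _
          have bd' : ∀ x ∈ leafMultiset (Ctx.fill c (node (node A B) C')), x ≤ m := by
            intro y hy
            rw [hkey] at hy
            obtain ⟨hne, hmem⟩ := (hnd.mem_erase_iff).mp hy
            have := hbd y hmem
            omega
          have hk' : max (min (minLeaf A) (minLeaf B)) (minLeaf C') = k := by
            rw [hminC']; exact hk
          have hlen := LEN m (Ctx.fill c (node (node A B) C')) (Ctx.fill c (node (node A C') B))
            (by rw [fill_ms, fill_ms]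
                congr 1
                show leafMultiset A + leafMultiset B + leafMultiset C'
                  = leafMultiset A + leafMultiset C' + leafMultiset B
                exact add_right_comm _ _ _)
          simp only [olaEncodeAux, hf₁, hf₂]
          exact step_bound hlen (ih c A B C' k hk' nd' bd') (Or.inl rfl)

end OLAAux
/-- Let `T` be a leaf-ordered rooted binary tree on `n` leaves and
let `e` be the internal edge between the node `(A,B)` (lower endpoint, canonical
label `-j`) and the node `((A,B),C)` (upper endpoint, canonical label `-k`), sitting
in a context `c`.  If `T'` is obtained from `T` by the NNI move across `e` turning
`((A,B),C)` into `((A,C),B)` and in `T'` the upper endpoint of the modified edge has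
canonical label `-j` instead of `-k`, then `d_OLA(T, T') ≤ 1 + c_k`, where `c_k` is
the number of entries equal to `-k` in the OLA encoding of `T`. -/
theorem nni_swapped_upper_label_dist_bound (n j k : ℕ) (T T' : BTree)
    (hT : BTree.IsRBT n T) (hT' : BTree.IsRBT n T')
    (c : Ctx) (A B C : BTree)
    (hfill : TreeEquiv T (Ctx.fill c (BTree.node (BTree.node A B) C)))
    (hfill' : TreeEquiv T' (Ctx.fill c (BTree.node (BTree.node A C) B)))
    (hupper : BTree.nodeLabel (BTree.node (BTree.node A B) C) = -(k : ℤ))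
    (hlower : BTree.nodeLabel (BTree.node A B) = -(j : ℤ))
    (hupper' : BTree.nodeLabel (BTree.node (BTree.node A C) B) = -(j : ℤ)) :
    olaDist T T' ≤ 1 + (BTree.olaEncode T).count (-(k : ℤ)) := by
  obtain ⟨canT, msT⟩ := hT
  obtain ⟨canT', msT'⟩ := hT'
  have ndT : (BTree.leafMultiset T).Nodup := msT ▸ Multiset.nodup_range n
  have ndT' : (BTree.leafMultiset T').Nodup := msT' ▸ Multiset.nodup_range n
  have hnT : BTree.numLeaves T = n := by rw [← OLAAux.ms_card, msT, Multiset.card_range]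
  have hnT' : BTree.numLeaves T' = n := by rw [← OLAAux.ms_card, msT', Multiset.card_range]
  have hE : BTree.olaEncode T
      = BTree.olaEncodeAux (n-1) (Ctx.fill c (BTree.node (BTree.node A B) C)) := by
    rw [BTree.olaEncode, hnT]
    exact OLAAux.equiv_encodeAux (n-1) ndT hfill
  have hE' : BTree.olaEncode T'
      = BTree.olaEncodeAux (n-1) (Ctx.fill c (BTree.node (BTree.node A C) B)) := by
    rw [BTree.olaEncode, hnT']
    exact OLAAux.equiv_encodeAux (n-1) ndT' hfill'
  have hkeq : max (min (BTree.minLeaf A) (BTree.minLeaf B)) (BTree.minLeaf C) = k := by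
    have h := hupper
    simp only [BTree.nodeLabel, BTree.minLeaf] at h
    rw [← Nat.cast_max, neg_inj, Nat.cast_inj] at h
    exact h
  have hmsfill : BTree.leafMultiset (Ctx.fill c (BTree.node (BTree.node A B) C))
      = Multiset.range n := by rw [← OLAAux.equiv_ms hfill, msT]
  have ndfill : (BTree.leafMultiset (Ctx.fill c (BTree.node (BTree.node A B) C))).Nodup := by
    rw [hmsfill]; exact Multiset.nodup_range n
  have bdfill : ∀ x ∈ BTree.leafMultiset (Ctx.fill c (BTree.node (BTree.node A B) C)),
      x ≤ n - 1 := by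
    intro x hx
    rw [hmsfill] at hx
    have := Multiset.mem_range.mp hx
    omega
  have hc0re := OLAAux.core (n-1) c A B C k hkeq ndfill bdfill
  unfold olaDist
  rw [hE, hE']
  exact hc0re
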